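/- Let p ≥ 1, d ≥ 1 be an integer, b ≥ 0 and α > b + d/p, and let c0 > 0. Let (ξ_{l,r}), for l ∈ ℕ and 1 ≤ r ≤ N_l where N_l ≤ c0·2^{ld}, be independent standard p-exponential random variables. Then there exist constants c1, c2 > 0 such that for every r > 0, P( Σ_{l≥0} Σ_{r=1}^{N_l} 2^{−p l (α−b)} |ξ_{l,r}|^p ≥ r^p ) ≤ c1 · exp(−c2 r^p). (This is the tail bound Π'(‖θ‖_{B^b_{pp}} ≥ r) ≤ c1 e^{−c2 r^p} for the Besov prior Π' expressed through wavelet coefficients.) -/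

import Mathlib

open MeasureTheory Real Set ProbabilityTheory

/-- The standard univariate `p`-exponential distribution `Exp(p;0,1)`: the probability measure
on `ℝ` with density proportional to `exp(−|x|^p/p)`. -/
noncomputable def stdPExp (p : ℝ) : Measure ℝ :=
  (∫⁻ x : ℝ, ENNReal.ofReal (Real.exp (-(|x| ^ p / p))))⁻¹ •
    MeasureTheory.volume.withDensity fun x => ENNReal.ofReal (Real.exp (-(|x| ^ p / p)))

lemma aux_integrable_exp_neg_mul_abs {c : ℝ} (hc : 0 < c) :
    Integrable (fun x : ℝ => Real.exp (-(c * |x|))) := by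
  have hIoi : IntegrableOn (fun x : ℝ => Real.exp (-(c * |x|))) (Ioi 0) := by
    refine (exp_neg_integrableOn_Ioi 0 hc).congr_fun (fun x hx => ?_) measurableSet_Ioi
    rw [abs_of_pos hx]; ring_nf
  rw [← integrableOn_univ, ← @Iio_union_Ici _ _ (0 : ℝ), integrableOn_union,
    integrableOn_Ici_iff_integrableOn_Ioi]
  refine ⟨?_, hIoi⟩
  rw [← (Measure.measurePreserving_neg (volume : Measure ℝ)).integrableOn_comp_preimage
      (Homeomorph.neg ℝ).measurableEmbedding]
  simp only [Function.comp_def, abs_neg, neg_preimage, neg_Iio, neg_zero]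
  exact hIoi

lemma aux_pointwise {p s x : ℝ} (hp : 1 ≤ p) (hs : 0 ≤ s) (hx : s ≤ |x|) :
    Real.exp (-(|x| ^ p / p)) ≤
      Real.exp (1 / p) * Real.exp (-(s ^ p) / (2 * p)) * Real.exp (-(|x| / (2 * p))) := by
  have hp0 : (0 : ℝ) < p := lt_of_lt_of_le one_pos hp
  rw [← Real.exp_add, ← Real.exp_add, Real.exp_le_exp]
  have key : s ^ p / 2 + |x| / 2 - 1 ≤ |x| ^ p := by
    set t := |x| with ht
    have ht0 : 0 ≤ t := abs_nonneg x
    rcases le_or_gt t 1 with h1 | h1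
    · have hsp : s ^ p ≤ 1 := Real.rpow_le_one hs (le_trans hx h1) hp0.le
      have htp : 0 ≤ t ^ p := Real.rpow_nonneg ht0 p
      linarith
    · have hsp : s ^ p ≤ t ^ p := Real.rpow_le_rpow hs hx hp0.le
      have htp : t ≤ t ^ p := by
        calc t = t ^ (1 : ℝ) := (Real.rpow_one t).symm
        _ ≤ t ^ p := Real.rpow_le_rpow_of_exponent_le h1.le hp
      linarith
  have h2p : (0 : ℝ) < 2 * p := by linarith
  have h1 : -(|x| ^ p / p) = (-(|x| ^ p)) / p := by ring
  have h2 : 1 / p + -s ^ p / (2 * p) + -(|x| / (2 * p)) =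
      (1 - s ^ p / 2 - |x| / 2) / p := by field_simp; ring
  rw [h1, h2, div_le_div_iff_of_pos_right hp0]
  linarith

lemma aux_tail (p : ℝ) (hp : 1 ≤ p) :
    ∃ C > (0 : ℝ), ∀ s : ℝ, 0 ≤ s →
      stdPExp p {x : ℝ | s ≤ |x|} ≤ ENNReal.ofReal (C * Real.exp (-(s ^ p) / (2 * p))) := by
  have hp0 : (0 : ℝ) < p := lt_of_lt_of_le one_pos hp
  set f : ℝ → ENNReal := fun x => ENNReal.ofReal (Real.exp (-(|x| ^ p / p))) with hf
  set Z : ENNReal := ∫⁻ x : ℝ, f x with hZ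
  -- lower bound on Z
  have hZlow : ENNReal.ofReal (Real.exp (-(1/p)) * 2) ≤ Z := by
    calc ENNReal.ofReal (Real.exp (-(1/p)) * 2)
        = ENNReal.ofReal (Real.exp (-(1/p))) * volume (Icc (-1 : ℝ) 1) := by
          rw [Real.volume_Icc, ← ENNReal.ofReal_mul (Real.exp_pos _).le]; norm_num
      _ = ∫⁻ _ in Icc (-1 : ℝ) 1, ENNReal.ofReal (Real.exp (-(1/p))) := by
          rw [setLIntegral_const]
      _ ≤ ∫⁻ x in Icc (-1 : ℝ) 1, f x := by
          refine setLIntegral_mono' measurableSet_Icc (fun x hx => ?_)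
          refine ENNReal.ofReal_le_ofReal (Real.exp_le_exp.2 ?_)
          have hx1 : |x| ≤ 1 := abs_le.2 ⟨hx.1, hx.2⟩
          have : |x| ^ p ≤ 1 := Real.rpow_le_one (abs_nonneg x) hx1 hp0.le
          have hrec : |x| ^ p / p ≤ 1 / p := by
            exact div_le_div_of_nonneg_right this hp0.le
          linarith
      _ ≤ Z := setLIntegral_le_lintegral _ _
  -- the integral J
  have hInt : Integrable (fun x : ℝ => Real.exp (-(|x| / (2*p)))) := by
    have := aux_integrable_exp_neg_mul_abs (c := (2*p)⁻¹) (by positivity)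
    refine this.congr (Filter.Eventually.of_forall fun x => ?_)
    show Real.exp (-((2 * p)⁻¹ * |x|)) = Real.exp (-(|x| / (2 * p)))
    ring_nf
  set JR : ℝ := ∫ x : ℝ, Real.exp (-(|x| / (2*p))) with hJR
  have hJR0 : 0 ≤ JR := integral_nonneg fun x => (Real.exp_pos _).le
  have hJ : (∫⁻ x : ℝ, ENNReal.ofReal (Real.exp (-(|x| / (2*p))))) = ENNReal.ofReal JR :=
    (ofReal_integral_eq_lintegral_ofReal hInt
      (Filter.Eventually.of_forall fun x => (Real.exp_pos _).le)).symm
  refine ⟨(2 * Real.exp (-(1/p)))⁻¹ * Real.exp (1/p) * (JR + 1), by positivity, fun s hs => ?_⟩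
  have hS : MeasurableSet {x : ℝ | s ≤ |x|} := measurableSet_le measurable_const measurable_abs
  have happ : stdPExp p {x : ℝ | s ≤ |x|} = Z⁻¹ * ∫⁻ x in {x : ℝ | s ≤ |x|}, f x := by
    rw [stdPExp, Measure.smul_apply, withDensity_apply _ hS, smul_eq_mul]
  rw [happ]
  have hnum : (∫⁻ x in {x : ℝ | s ≤ |x|}, f x) ≤
      ENNReal.ofReal (Real.exp (1/p) * Real.exp (-(s ^ p) / (2*p))) * ENNReal.ofReal JR := by
    calc (∫⁻ x in {x : ℝ | s ≤ |x|}, f x)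
        ≤ ∫⁻ x in {x : ℝ | s ≤ |x|},
            ENNReal.ofReal (Real.exp (1/p) * Real.exp (-(s ^ p) / (2*p))) *
              ENNReal.ofReal (Real.exp (-(|x| / (2*p)))) := by
          refine setLIntegral_mono' hS (fun x hx => ?_)
          rw [← ENNReal.ofReal_mul (by positivity)]
          exact ENNReal.ofReal_le_ofReal (aux_pointwise hp hs hx)
      _ ≤ ∫⁻ x : ℝ, ENNReal.ofReal (Real.exp (1/p) * Real.exp (-(s ^ p) / (2*p))) *
              ENNReal.ofReal (Real.exp (-(|x| / (2*p)))) := setLIntegral_le_lintegral _ _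
      _ = ENNReal.ofReal (Real.exp (1/p) * Real.exp (-(s ^ p) / (2*p))) *
            ∫⁻ x : ℝ, ENNReal.ofReal (Real.exp (-(|x| / (2*p)))) := by
          rw [lintegral_const_mul']
          exact ENNReal.ofReal_ne_top
      _ = _ := by rw [hJ]
  have hZinv : Z⁻¹ ≤ ENNReal.ofReal ((2 * Real.exp (-(1/p)))⁻¹) := by
    rw [ENNReal.ofReal_inv_of_pos (by positivity)]
    refine ENNReal.inv_le_inv.2 ?_
    calc ENNReal.ofReal (2 * Real.exp (-(1/p)))
        = ENNReal.ofReal (Real.exp (-(1/p)) * 2) := by rw [mul_comm]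
      _ ≤ Z := hZlow
  calc Z⁻¹ * ∫⁻ x in {x : ℝ | s ≤ |x|}, f x
      ≤ ENNReal.ofReal ((2 * Real.exp (-(1/p)))⁻¹) *
          (ENNReal.ofReal (Real.exp (1/p) * Real.exp (-(s ^ p) / (2*p))) * ENNReal.ofReal JR) :=
        mul_le_mul' hZinv hnum
    _ ≤ ENNReal.ofReal ((2 * Real.exp (-(1/p)))⁻¹ * Real.exp (1/p) * (JR + 1) *
          Real.exp (-(s ^ p) / (2*p))) := by
        rw [← ENNReal.ofReal_mul (by positivity), ← ENNReal.ofReal_mul (by positivity)]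
        refine ENNReal.ofReal_le_ofReal ?_
        have e1 := Real.exp_pos (-(s ^ p) / (2*p))
        have e2 := Real.exp_pos (1/p)
        have i1 : (0:ℝ) < (2 * Real.exp (-(1/p)))⁻¹ := by positivity
        nlinarith [mul_pos (mul_pos i1 e2) e1]
    _ = ENNReal.ofReal ((2 * Real.exp (-(1/p)))⁻¹ * Real.exp (1/p) * (JR + 1) *
          Real.exp (-(s ^ p) / (2*p))) := rfl

open Filter in
lemma aux_summable (d : ℕ) {ε c : ℝ} (hε : 0 < ε) (hc : 0 < c) :
    Summable (fun l : ℕ => (2:ℝ) ^ (l * d) * Real.exp (-(c * ((2:ℝ) ^ ((l:ℝ) * ε) - 1)))) := by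
  set f : ℕ → ℝ := fun l => (2:ℝ) ^ (l * d) * Real.exp (-(c * ((2:ℝ) ^ ((l:ℝ) * ε) - 1)))
    with hfdef
  have h2ε : 1 < (2:ℝ) ^ ε := (Real.one_lt_rpow_iff_of_pos two_pos).2 (Or.inl ⟨one_lt_two, hε⟩)
  set g : ℕ → ℝ := fun l => (2:ℝ) ^ d * Real.exp (-(c * ((2:ℝ) ^ ((l:ℝ) * ε) * ((2:ℝ) ^ ε - 1))))
    with hgdef
  have key : ∀ l : ℕ, f (l + 1) = f l * g l := by
    intro l
    have hrw : (2:ℝ) ^ ((((l+1 : ℕ)):ℝ) * ε) = (2:ℝ) ^ ((l:ℝ) * ε) * (2:ℝ) ^ ε := by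
      rw [← Real.rpow_add two_pos]; congr 1; push_cast; ring
    have hpow : (2:ℝ) ^ ((l + 1) * d) = (2:ℝ) ^ (l * d) * 2 ^ d := by
      rw [add_one_mul, pow_add]
    simp only [hfdef, hgdef, hpow, hrw]
    rw [mul_mul_mul_comm]
    congr 1
    rw [← Real.exp_add]
    congr 1
    ring
  have hgpos : ∀ l, 0 ≤ g l := fun l => by positivity
  have hfpos : ∀ l, 0 ≤ f l := fun l => by positivity
  have hA : Tendsto (fun l : ℕ => c * ((2:ℝ) ^ ((l:ℝ) * ε) * ((2:ℝ) ^ ε - 1))) atTop atTop := by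
    have hpowt : Tendsto (fun l : ℕ => ((2:ℝ) ^ ε) ^ l) atTop atTop :=
      tendsto_pow_atTop_atTop_of_one_lt h2ε
    have heq : (fun l : ℕ => c * ((2:ℝ) ^ ((l:ℝ) * ε) * ((2:ℝ) ^ ε - 1))) =
        fun l : ℕ => ((2:ℝ) ^ ε) ^ l * ((2:ℝ) ^ ε - 1) * c := by
      funext l
      rw [← Real.rpow_natCast ((2:ℝ) ^ ε) l, ← Real.rpow_mul (by norm_num : (0:ℝ) ≤ 2)]
      rw [mul_comm ε (l:ℝ)]
      ring
    rw [heq]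
    exact (hpowt.atTop_mul_const (by linarith)).atTop_mul_const hc
  have hg0 : Tendsto g atTop (nhds ((2:ℝ) ^ d * 0)) :=
    Tendsto.const_mul _ (Real.tendsto_exp_neg_atTop_nhds_zero.comp hA)
  rw [mul_zero] at hg0
  have hev : ∀ᶠ l in atTop, g l < 1/2 := hg0.eventually_lt_const (by norm_num)
  refine summable_of_ratio_norm_eventually_le (r := 1/2) (by norm_num) ?_
  filter_upwards [hev] with l hl
  rw [key l, Real.norm_eq_abs, Real.norm_eq_abs, abs_mul, abs_of_nonneg (hfpos l),
    abs_of_nonneg (hgpos l), mul_comm]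
  exact mul_le_mul_of_nonneg_right hl.le (hfpos l)

/-- Tail bound for the Besov prior expressed in wavelet coefficients: for `p ≥ 1`, `b ≥ 0`,
`α > b + d/p` and independent standard `p`-exponential variables `ξ_{l,r}` (`1 ≤ r ≤ N_l`,
`N_l ≤ c₀ 2^{ld}`), there exist `c₁, c₂ > 0` such that for all `r > 0`,
`P(Σ_{l,r} 2^{−pl(α−b)} |ξ_{l,r}|^p ≥ r^p) ≤ c₁ exp(−c₂ r^p)`. -/
theorem besov_prior_tail_bound {Ω : Type*} [MeasureSpace Ω]
    [IsProbabilityMeasure (ℙ : Measure Ω)]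
    (p : ℝ) (hp : 1 ≤ p) (d : ℕ) (hd : 1 ≤ d) (b α c0 : ℝ) (hb : 0 ≤ b)
    (hα : b + d / p < α) (hc0 : 0 < c0) (N : ℕ → ℕ)
    (hN : ∀ l, (N l : ℝ) ≤ c0 * 2 ^ (l * d))
    (ξ : (Σ l : ℕ, Fin (N l)) → Ω → ℝ) (hmeas : ∀ i, Measurable (ξ i))
    (hdist : ∀ i, Measure.map (ξ i) ℙ = stdPExp p)
    (hindep : iIndepFun ξ ℙ) :
    ∃ c1 > (0 : ℝ), ∃ c2 > (0 : ℝ), ∀ r : ℝ, 0 < r →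
      ℙ {ω | ENNReal.ofReal (r ^ p) ≤ ∑' i : Σ l : ℕ, Fin (N l),
            ENNReal.ofReal ((2 : ℝ) ^ (-(p * (i.1 : ℝ) * (α - b))) * |ξ i ω| ^ p)}
        ≤ ENNReal.ofReal (c1 * Real.exp (-c2 * r ^ p)) := by
  have hp0 : (0 : ℝ) < p := lt_of_lt_of_le one_pos hp
  have hβ : (d : ℝ) / p < α - b := by linarith
  have hpβ : (d : ℝ) < p * (α - b) := by
    have := (div_lt_iff₀ hp0).1 hβ
    linarith [this]
  set ε : ℝ := (p * (α - b) - (d : ℝ)) / 2 with hεdef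
  have hε : 0 < ε := by rw [hεdef]; linarith
  set q : ℝ := (2:ℝ) ^ (-ε) with hqdef
  have hq0 : 0 < q := Real.rpow_pos_of_pos two_pos _
  have hq1 : q < 1 := by
    rw [hqdef]
    exact Real.rpow_lt_one_of_one_lt_of_neg one_lt_two (by linarith)
  set A : ℝ := (1 - q) / (2 * c0) with hAdef
  have hA : 0 < A := by rw [hAdef]; exact div_pos (by linarith) (by positivity)
  set c : ℝ := A / (2 * p) with hcdef
  have hc : 0 < c := by rw [hcdef]; positivity
  obtain ⟨Cp, hCp, htail⟩ := aux_tail p hp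
  set K : ℝ := ∑' l : ℕ, (2:ℝ) ^ (l * d) * Real.exp (-(c * ((2:ℝ) ^ ((l:ℝ) * ε) - 1)))
    with hKdef
  have hKsum := aux_summable d hε hc
  have hK0 : 0 ≤ K := tsum_nonneg fun l => by positivity
  clear_value ε q A c K
  refine ⟨Cp * c0 * K + Real.exp c, by positivity, c, hc, fun r hr => ?_⟩
  -- weights
  set w : ℕ → ℝ := fun l => (2:ℝ) ^ (-(p * (l:ℝ) * (α - b))) with hwdef
  have hw : ∀ l, 0 < w l := fun l => Real.rpow_pos_of_pos two_pos _
  set a : ℕ → ℝ := fun l => A * (2:ℝ) ^ ((l:ℝ) * ε) * w l with hadef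
  have ha : ∀ l, 0 < a l := fun l => by
    have := hw l; simp only [hadef]; positivity
  -- key exponent algebra : 2^{ld} * (2^{lε} * w l) = q ^ l
  have hexp : ∀ l : ℕ, (2:ℝ) ^ (l * d) * ((2:ℝ) ^ ((l:ℝ) * ε) * w l) = q ^ l := by
    intro l
    rw [hwdef, hqdef, ← Real.rpow_natCast 2 (l * d), ← Real.rpow_natCast ((2:ℝ) ^ (-ε)) l,
      ← Real.rpow_mul (by norm_num : (0:ℝ) ≤ 2), ← Real.rpow_add two_pos,
      ← Real.rpow_add two_pos]
    congr 1
    rw [hεdef]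
    push_cast
    ring
  have hNa : ∀ l : ℕ, (N l : ℝ) * a l ≤ c0 * A * q ^ l := by
    intro l
    have h1 : (N l : ℝ) * a l ≤ (c0 * 2 ^ (l * d)) * a l :=
      mul_le_mul_of_nonneg_right (hN l) (ha l).le
    calc (N l : ℝ) * a l ≤ (c0 * 2 ^ (l * d)) * a l := h1
      _ = c0 * A * ((2:ℝ) ^ (l * d) * ((2:ℝ) ^ ((l:ℝ) * ε) * w l)) := by
          rw [hadef]; ring
      _ = c0 * A * q ^ l := by rw [hexp l]
  clear_value w a
  set T : (Σ l : ℕ, Fin (N l)) → Set Ω := fun i => {ω | a i.1 * r ^ p ≤ w i.1 * |ξ i ω| ^ p}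
    with hTdef
  have hrp : 0 < r ^ p := Real.rpow_pos_of_pos hr p
  have hsub : {ω | ENNReal.ofReal (r ^ p) ≤ ∑' i : Σ l : ℕ, Fin (N l),
      ENNReal.ofReal ((2 : ℝ) ^ (-(p * (i.1 : ℝ) * (α - b))) * |ξ i ω| ^ p)} ⊆ ⋃ i, T i := by
    intro ω hω
    simp only [mem_setOf_eq] at hω
    by_contra hcon
    simp only [mem_iUnion, not_exists, hTdef, mem_setOf_eq, not_le, hwdef] at hcon
    have hterm : ∀ i : Σ l : ℕ, Fin (N l),
        ENNReal.ofReal ((2 : ℝ) ^ (-(p * (i.1 : ℝ) * (α - b))) * |ξ i ω| ^ p) ≤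
          ENNReal.ofReal (a i.1 * r ^ p) := fun i =>
      ENNReal.ofReal_le_ofReal (le_of_lt (hcon i))
    have hle : ENNReal.ofReal (r ^ p) ≤ ENNReal.ofReal (r ^ p / 2) := by
      calc ENNReal.ofReal (r ^ p)
          ≤ ∑' i : Σ l : ℕ, Fin (N l),
            ENNReal.ofReal ((2 : ℝ) ^ (-(p * (i.1 : ℝ) * (α - b))) * |ξ i ω| ^ p) := hω
        _ ≤ ∑' i : Σ l : ℕ, Fin (N l), ENNReal.ofReal (a i.1 * r ^ p) :=
            ENNReal.tsum_le_tsum hterm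
        _ = ∑' l : ℕ, ∑' _j : Fin (N l), ENNReal.ofReal (a l * r ^ p) :=
            ENNReal.tsum_sigma' _
        _ = ∑' l : ℕ, (N l : ENNReal) * ENNReal.ofReal (a l * r ^ p) := by
            congr 1; funext l
            rw [tsum_fintype]
            simp [Finset.sum_const, nsmul_eq_mul]
        _ ≤ ∑' l : ℕ, ENNReal.ofReal (c0 * A * r ^ p * q ^ l) := by
            refine ENNReal.tsum_le_tsum fun l => ?_
            rw [← ENNReal.ofReal_natCast (N l), ← ENNReal.ofReal_mul (Nat.cast_nonneg _)]
            refine ENNReal.ofReal_le_ofReal ?_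
            calc (N l : ℝ) * (a l * r ^ p) = ((N l : ℝ) * a l) * r ^ p := by ring
              _ ≤ (c0 * A * q ^ l) * r ^ p := mul_le_mul_of_nonneg_right (hNa l) hrp.le
              _ = c0 * A * r ^ p * q ^ l := by ring
        _ = ENNReal.ofReal (∑' l : ℕ, c0 * A * r ^ p * q ^ l) :=
            (ENNReal.ofReal_tsum_of_nonneg (fun l => by positivity)
              ((summable_geometric_of_lt_one hq0.le hq1).mul_left _)).symm
        _ = ENNReal.ofReal (c0 * A * r ^ p * (1 - q)⁻¹) := by
            rw [tsum_mul_left, tsum_geometric_of_lt_one hq0.le hq1]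
        _ = ENNReal.ofReal (r ^ p / 2) := by
            congr 1
            have h1 : (1:ℝ) - q ≠ 0 := by linarith
            have h2 : c0 ≠ 0 := ne_of_gt hc0
            rw [hAdef]
            field_simp
    have h2 : r ^ p ≤ r ^ p / 2 := (ENNReal.ofReal_le_ofReal_iff (by positivity)).1 hle
    linarith
  -- per-index tail bound
  have hTbound : ∀ i : Σ l : ℕ, Fin (N l),
      ℙ (T i) ≤ ENNReal.ofReal
        (Cp * Real.exp (-(c * ((2:ℝ) ^ ((i.1:ℝ) * ε) * r ^ p)))) := by
    intro i
    set l := i.1 with hldef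
    set s : ℝ := (A * (2:ℝ) ^ ((l:ℝ) * ε)) ^ p⁻¹ * r with hsdef
    have hbase : (0:ℝ) < A * (2:ℝ) ^ ((l:ℝ) * ε) := by positivity
    have hs0 : 0 ≤ s := by
      rw [hsdef]
      positivity
    have hsp : s ^ p = A * (2:ℝ) ^ ((l:ℝ) * ε) * r ^ p := by
      rw [hsdef, Real.mul_rpow (Real.rpow_nonneg hbase.le _) hr.le,
        Real.rpow_inv_rpow hbase.le (ne_of_gt hp0)]
    have hUsub : T i ⊆ ξ i ⁻¹' {x : ℝ | s ≤ |x|} := by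
      intro ω hω
      simp only [hTdef, mem_setOf_eq] at hω
      have h1 : A * (2:ℝ) ^ ((l:ℝ) * ε) * r ^ p ≤ |ξ i ω| ^ p := by
        have h3 : (A * (2:ℝ) ^ ((l:ℝ) * ε) * r ^ p) * w l ≤ |ξ i ω| ^ p * w l := by
          calc (A * (2:ℝ) ^ ((l:ℝ) * ε) * r ^ p) * w l = a l * r ^ p := by
                rw [hadef]; ring
            _ ≤ w l * |ξ i ω| ^ p := hω
            _ = |ξ i ω| ^ p * w l := mul_comm _ _
        exact le_of_mul_le_mul_right h3 (hw l)
      simp only [mem_preimage, mem_setOf_eq]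
      refine (Real.rpow_le_rpow_iff hs0 (abs_nonneg _) hp0).1 ?_
      rw [hsp]; exact h1
    have hmeasU : MeasurableSet {x : ℝ | s ≤ |x|} :=
      measurableSet_le measurable_const measurable_abs
    calc ℙ (T i) ≤ ℙ (ξ i ⁻¹' {x : ℝ | s ≤ |x|}) := measure_mono hUsub
      _ = stdPExp p {x : ℝ | s ≤ |x|} := by
          rw [← hdist i, Measure.map_apply (hmeas i) hmeasU]
      _ ≤ ENNReal.ofReal (Cp * Real.exp (-s ^ p / (2 * p))) := htail s hs0
      _ = ENNReal.ofReal (Cp * Real.exp (-(c * ((2:ℝ) ^ ((l:ℝ) * ε) * r ^ p)))) := by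
          congr 3
          rw [hsp, hcdef]
          field_simp
  rcases le_or_gt 1 r with hr1 | hr1
  · -- main case : r ≥ 1
    have hrp1 : 1 ≤ r ^ p := Real.one_le_rpow hr1 hp0.le
    have hsplit : ∀ l : ℕ, Real.exp (-(c * ((2:ℝ) ^ ((l:ℝ) * ε) * r ^ p))) ≤
        Real.exp (-(c * r ^ p)) * Real.exp (-(c * ((2:ℝ) ^ ((l:ℝ) * ε) - 1))) := by
      intro l
      rw [← Real.exp_add, Real.exp_le_exp]
      have ht1 : 1 ≤ (2:ℝ) ^ ((l:ℝ) * ε) := Real.one_le_rpow one_le_two (by positivity)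
      nlinarith [mul_nonneg (mul_nonneg hc.le (sub_nonneg.2 ht1)) (sub_nonneg.2 hrp1)]
    calc ℙ {ω | ENNReal.ofReal (r ^ p) ≤ ∑' i : Σ l : ℕ, Fin (N l),
          ENNReal.ofReal ((2 : ℝ) ^ (-(p * (i.1 : ℝ) * (α - b))) * |ξ i ω| ^ p)}
        ≤ ℙ (⋃ i, T i) := measure_mono hsub
      _ ≤ ∑' i : Σ l : ℕ, Fin (N l), ℙ (T i) := measure_iUnion_le _
      _ ≤ ∑' i : Σ l : ℕ, Fin (N l), ENNReal.ofReal ((Cp * Real.exp (-(c * r ^ p))) *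
            Real.exp (-(c * ((2:ℝ) ^ ((i.1:ℝ) * ε) - 1)))) := by
          refine ENNReal.tsum_le_tsum fun i => ?_
          refine le_trans (hTbound i) (ENNReal.ofReal_le_ofReal ?_)
          have h4 := hsplit i.1
          rw [mul_assoc]
          exact mul_le_mul_of_nonneg_left h4 hCp.le
      _ = ∑' l : ℕ, (N l : ENNReal) * ENNReal.ofReal ((Cp * Real.exp (-(c * r ^ p))) *
            Real.exp (-(c * ((2:ℝ) ^ ((l:ℝ) * ε) - 1)))) := by
          rw [ENNReal.tsum_sigma']
          congr 1; funext l
          rw [tsum_fintype]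
          simp [Finset.sum_const, nsmul_eq_mul]
      _ ≤ ∑' l : ℕ, ENNReal.ofReal ((Cp * Real.exp (-(c * r ^ p)) * c0) *
            ((2:ℝ) ^ (l * d) * Real.exp (-(c * ((2:ℝ) ^ ((l:ℝ) * ε) - 1))))) := by
          refine ENNReal.tsum_le_tsum fun l => ?_
          rw [← ENNReal.ofReal_natCast (N l), ← ENNReal.ofReal_mul (Nat.cast_nonneg _)]
          refine ENNReal.ofReal_le_ofReal ?_
          have hXpos : 0 ≤ Cp * Real.exp (-(c * r ^ p)) := by positivity
          have hepos : 0 ≤ Real.exp (-(c * ((2:ℝ) ^ ((l:ℝ) * ε) - 1))) := (Real.exp_pos _).le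
          calc (N l : ℝ) * ((Cp * Real.exp (-(c * r ^ p))) *
                Real.exp (-(c * ((2:ℝ) ^ ((l:ℝ) * ε) - 1))))
              = (Cp * Real.exp (-(c * r ^ p))) *
                ((N l : ℝ) * Real.exp (-(c * ((2:ℝ) ^ ((l:ℝ) * ε) - 1)))) := by ring
            _ ≤ (Cp * Real.exp (-(c * r ^ p))) *
                ((c0 * 2 ^ (l * d)) * Real.exp (-(c * ((2:ℝ) ^ ((l:ℝ) * ε) - 1)))) := by
                refine mul_le_mul_of_nonneg_left ?_ hXpos
                exact mul_le_mul_of_nonneg_right (hN l) hepos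
            _ = (Cp * Real.exp (-(c * r ^ p)) * c0) *
                ((2:ℝ) ^ (l * d) * Real.exp (-(c * ((2:ℝ) ^ ((l:ℝ) * ε) - 1)))) := by ring
      _ = ENNReal.ofReal (∑' l : ℕ, (Cp * Real.exp (-(c * r ^ p)) * c0) *
            ((2:ℝ) ^ (l * d) * Real.exp (-(c * ((2:ℝ) ^ ((l:ℝ) * ε) - 1))))) :=
          (ENNReal.ofReal_tsum_of_nonneg (fun l => by positivity) (hKsum.mul_left _)).symm
      _ = ENNReal.ofReal ((Cp * Real.exp (-(c * r ^ p)) * c0) * K) := by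
          rw [tsum_mul_left, ← hKdef]
      _ ≤ ENNReal.ofReal ((Cp * c0 * K + Real.exp c) * Real.exp (-c * r ^ p)) := by
          refine ENNReal.ofReal_le_ofReal ?_
          rw [neg_mul]
          nlinarith [mul_pos (Real.exp_pos c) (Real.exp_pos (-(c * r ^ p))),
            Real.exp_pos (-(c * r ^ p))]
  · -- small r : trivial bound
    refine le_trans prob_le_one ?_
    rw [← ENNReal.ofReal_one]
    refine ENNReal.ofReal_le_ofReal ?_
    have hrp1 : r ^ p ≤ 1 := Real.rpow_le_one hr.le hr1.le hp0.le
    have hmono : Real.exp (-c) ≤ Real.exp (-c * r ^ p) := by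
      rw [Real.exp_le_exp]
      nlinarith
    have h1 : 0 ≤ Cp * c0 * K := mul_nonneg (mul_nonneg hCp.le hc0.le) hK0
    calc (1:ℝ) = Real.exp c * Real.exp (-c) := by rw [← Real.exp_add]; simp
      _ ≤ Real.exp c * Real.exp (-c * r ^ p) :=
          mul_le_mul_of_nonneg_left hmono (Real.exp_pos c).le
      _ ≤ (Cp * c0 * K + Real.exp c) * Real.exp (-c * r ^ p) :=
          mul_le_mul_of_nonneg_right (by linarith) (Real.exp_pos _).le
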